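/- Let g : ℝ → ℝ be a nonnegative continuously differentiable function with g and g' square-integrable, and suppose ∫_{-∞}^{∞} g(v)² dv = N. Then for every u ∈ ℝ, g(u)⁴ ≤ 4 N ∫_{-∞}^{∞} (g'(v))² dv. -/

import Mathlib

open MeasureTheory Real

theorem stmt0 (g : ℝ → ℝ) (N : ℝ)
    (hg : ContDiff ℝ 1 g) (hpos : ∀ v, 0 ≤ g v)
    (hgL2 : MemLp g 2 (volume : Measure ℝ))
    (hg'L2 : MemLp (deriv g) 2 (volume : Measure ℝ))
    (hN : ∫ v, (g v) ^ 2 = N) :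
    ∀ u : ℝ, (g u) ^ 4 ≤ 4 * N * ∫ v, (deriv g v) ^ 2 := by
  intro u
  set B : ℝ := ∫ v, (deriv g v) ^ 2 with hB
  have hdg : Differentiable ℝ g := hg.differentiable (by norm_num)
  have hgc : Continuous g := hg.continuous
  have hg'c : Continuous (deriv g) := hg.continuous_deriv le_rfl
  have hsq : Integrable (fun v => g v ^ 2) := hgL2.integrable_sq
  have hsq' : Integrable (fun v => deriv g v ^ 2) := hg'L2.integrable_sq
  have hN0 : 0 ≤ N := hN ▸ integral_nonneg fun v => sq_nonneg _
  have hB0 : 0 ≤ B := integral_nonneg fun v => sq_nonneg _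
  -- integrability of the product
  have hmul : Integrable (fun v => |g v * deriv g v|) := by
    refine Integrable.mono' ((hsq.add hsq').div_const 2)
      ((hgc.mul hg'c).abs.aestronglyMeasurable) (Filter.Eventually.of_forall fun v => ?_)
    have h' : |g v * deriv g v| ≤ (g v ^ 2 + deriv g v ^ 2) / 2 := by
      rw [abs_mul]
      nlinarith [sq_abs (g v), sq_abs (deriv g v), sq_nonneg (|g v| - |deriv g v|)]
    simpa [Real.norm_eq_abs, abs_abs] using h'
  -- Cauchy–Schwarz
  have hCS : ∫ v, |g v * deriv g v| ≤ Real.sqrt N * Real.sqrt B := by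
    have h2 : (2 : ℝ).HolderConjugate 2 := by
      constructor <;> norm_num
    have := integral_mul_norm_le_Lp_mul_Lq (μ := (volume : Measure ℝ)) h2
      (by simpa using hgL2) (by simpa using hg'L2)
    have heq1 : ∫ v, ‖g v‖ * ‖deriv g v‖ = ∫ v, |g v * deriv g v| := by
      congr 1; ext v; rw [abs_mul]; rfl
    have heq2 : (∫ v, ‖g v‖ ^ (2:ℝ)) = N := by
      rw [← hN]; congr 1; ext v
      rw [Real.norm_eq_abs, show (2:ℝ) = ((2:ℕ):ℝ) by norm_num, Real.rpow_natCast, sq_abs]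
    have heq3 : (∫ v, ‖deriv g v‖ ^ (2:ℝ)) = B := by
      rw [hB]; congr 1; ext v
      rw [Real.norm_eq_abs, show (2:ℝ) = ((2:ℕ):ℝ) by norm_num, Real.rpow_natCast, sq_abs]
    rw [heq1, heq2, heq3] at this
    calc ∫ v, |g v * deriv g v| ≤ N ^ (1/2 : ℝ) * B ^ (1/2 : ℝ) := this
      _ = Real.sqrt N * Real.sqrt B := by
          rw [Real.sqrt_eq_rpow, Real.sqrt_eq_rpow]
  -- key bound: for any a ≤ u, g u ^ 2 ≤ g a ^ 2 + 2 * ∫ |g g'|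
  have key : ∀ a : ℝ, a ≤ u → g u ^ 2 ≤ g a ^ 2 + 2 * ∫ v, |g v * deriv g v| := by
    intro a ha
    have hftc : ∫ x in a..u, 2 * g x * deriv g x = g u ^ 2 - g a ^ 2 := by
      apply intervalIntegral.integral_eq_sub_of_hasDerivAt (f := fun x => g x ^ 2)
      · intro x _
        have := ((hdg x).hasDerivAt).fun_pow 2
        simpa [pow_one, mul_comm, mul_assoc, mul_left_comm] using this
      · exact ((continuous_const.mul hgc).mul hg'c).intervalIntegrable a u
    have hbound : ∫ x in a..u, 2 * g x * deriv g x ≤ 2 * ∫ v, |g v * deriv g v| := by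
      calc ∫ x in a..u, 2 * g x * deriv g x
          ≤ |∫ x in a..u, 2 * g x * deriv g x| := le_abs_self _
        _ ≤ ∫ x in a..u, |2 * g x * deriv g x| :=
            intervalIntegral.abs_integral_le_integral_abs ha
        _ = ∫ x in Set.Ioc a u, 2 * |g x * deriv g x| := by
            rw [intervalIntegral.integral_of_le ha]
            congr 1; ext x; rw [mul_assoc, abs_mul]; norm_num
        _ ≤ ∫ v, 2 * |g v * deriv g v| := by
            apply setIntegral_le_integral (hmul.const_mul 2)
            exact Filter.Eventually.of_forall fun v => by positivity
        _ = 2 * ∫ v, |g v * deriv g v| := by rw [integral_const_mul]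
    linarith [hftc ▸ hbound]
  -- choosing a with g a ^ 2 small
  have small : ∀ ε > (0:ℝ), ∃ a < u, g a ^ 2 < ε := by
    intro ε hε
    by_contra hcon
    push_neg at hcon
    have gen : ∀ a : ℝ, a < u → ε * (u - a) ≤ N := by
      intro a hau
      have h1 : ∫ x in Set.Ico a u, (ε : ℝ) ≤ ∫ x in Set.Ico a u, g x ^ 2 := by
        apply setIntegral_mono_on (integrableOn_const (by simp))
          (hsq.integrableOn) measurableSet_Ico
        intro x hx
        exact hcon x hx.2
      rw [setIntegral_const, Real.volume_real_Ico_of_le hau.le, smul_eq_mul] at h1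
      have h2 : ∫ x in Set.Ico a u, g x ^ 2 ≤ N := by
        rw [← hN]
        exact setIntegral_le_integral hsq (Filter.Eventually.of_forall fun v => sq_nonneg _)
      calc ε * (u - a) = (u - a) * ε := by ring
        _ ≤ ∫ x in Set.Ico a u, g x ^ 2 := h1
        _ ≤ N := h2
    have hεpos : 0 < (N + 1) / ε := by positivity
    have := gen (u - (N + 1) / ε) (by linarith)
    rw [show u - (u - (N + 1) / ε) = (N + 1) / ε by ring,
      mul_div_cancel₀ _ (ne_of_gt hε)] at this
    linarith
  -- conclude g u ^ 2 ≤ 2 sqrt N sqrt B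
  have hmain : g u ^ 2 ≤ 2 * (Real.sqrt N * Real.sqrt B) := by
    refine le_of_forall_pos_le_add fun ε hε => ?_
    obtain ⟨a, hau, haε⟩ := small ε hε
    have := key a hau.le
    nlinarith [hCS]
  have hfin : g u ^ 4 = (g u ^ 2) ^ 2 := by ring
  rw [hfin]
  calc (g u ^ 2) ^ 2 ≤ (2 * (Real.sqrt N * Real.sqrt B)) ^ 2 := by
        apply pow_le_pow_left₀ (sq_nonneg _) hmain
    _ = 4 * (Real.sqrt N ^ 2) * (Real.sqrt B ^ 2) := by ring
    _ = 4 * N * B := by rw [Real.sq_sqrt hN0, Real.sq_sqrt hB0]
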